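/- Derivatives of the volume function: Let Σ be a complete simplicial projective fan refinement datum with GKZ chamber γ_Σ, and f the induced birational transform of divisors. For D with [D] ∈ γ_Σ and prime T-invariant divisors D_1, ..., D_r corresponding to rays ρ_1, ..., ρ_r, the r-th directional derivative ∂^r ĥ^0 / (∂D_1 ⋯ ∂D_r)(D) equals (n!/(n-r)!) · (f_*(D)^{n-r} · f_*(D_1) ⋯ f_*(D_r)). In particular this derivative is strictly positive on γ_Σ if ρ_1, ..., ρ_r span a cone of Σ, and vanishes identically on γ_Σ otherwise. -/

import Mathlib

open Finset

/-- The argument vector `(D, …, D, D_{ρ_1}, …, D_{ρ_r})` (with `n - r` copies of `D`)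
fed to the top intersection form of `X(Σ)`; the divisor `D_ρ` is recorded by the
coordinate vector `Pi.single ρ 1` in divisor space `ℝ^{Δ(1)}`. -/
noncomputable def mixedArg (n r rr : ℕ) (hrr : rr ≤ n) (d : Fin r → ℝ)
    (ρs : Fin rr → Fin r) : Fin n → (Fin r → ℝ) :=
  fun i => if hi : (i : ℕ) < n - rr then d
    else Pi.single (ρs ⟨(i : ℕ) - (n - rr), by have := i.isLt; omega⟩) (1 : ℝ)

lemma multilinear_bound {n r : ℕ} (B : MultilinearMap ℝ (fun _ : Fin n => (Fin r → ℝ)) ℝ)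
    (m : Fin n → (Fin r → ℝ)) :
    ‖B m‖ ≤ (∑ k : Fin n → Fin r, ‖B (fun i => Pi.single (k i) (1:ℝ))‖) * ∏ i, ‖m i‖ := by
  classical
  have hm : m = fun i => ∑ j : Fin r, (m i j) • (Pi.single j (1:ℝ) : Fin r → ℝ) := by
    funext i
    simp only [← Pi.single_smul, smul_eq_mul, mul_one, Finset.univ_sum_single]
  have h1 : B m = ∑ k : Fin n → Fin r, (∏ i, m i (k i)) • B (fun i => Pi.single (k i) (1:ℝ)) := by
    conv_lhs => rw [hm]
    rw [MultilinearMap.map_sum]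
    exact Finset.sum_congr rfl fun k _ => by rw [← MultilinearMap.map_smul_univ]
  rw [h1, Finset.sum_mul]
  refine (norm_sum_le _ _).trans (Finset.sum_le_sum fun k _ => ?_)
  rw [norm_smul]
  rw [mul_comm (‖B fun i => Pi.single (k i) (1:ℝ)‖)]
  gcongr
  calc ‖∏ i, m i (k i)‖ = ∏ i, ‖m i (k i)‖ := by
        simp [Real.norm_eq_abs, Finset.abs_prod]
    _ ≤ ∏ i, ‖m i‖ := Finset.prod_le_prod (fun _ _ => norm_nonneg _)
        (fun i _ => norm_le_pi_norm (m i) (k i))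

lemma exists_perm_arg {n r rr : ℕ} (hrr : rr ≤ n) (d : Fin r → ℝ) (ρs : Fin rr → Fin r)
    (e : Fin rr ↪ Fin n) (inst : DecidableEq (Fin n)) :
    ∃ σ : Equiv.Perm (Fin n), ∀ j : Fin n,
      (∀ h : j ∈ Set.range ⇑e,
        (Pi.single (ρs ((@Function.Embedding.toEquivRange _ _ _ inst e).symm ⟨j, h⟩)) (1:ℝ)
            : Fin r → ℝ)
          = mixedArg n r rr hrr d ρs (σ j)) ∧
      (j ∉ Set.range ⇑e → d = mixedArg n r rr hrr d ρs (σ j)) := by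
  classical
  let A' : Fin rr ≃ {j : Fin n // ¬ ((j : ℕ) < n - rr)} :=
    { toFun := fun k => ⟨⟨n - rr + k, by omega⟩, by simp⟩
      invFun := fun j => ⟨(j : ℕ) - (n - rr), by have := j.1.isLt; have := j.2; omega⟩
      left_inv := fun k => by ext; simp
      right_inv := fun j => by ext; have := j.2; simp; omega }
  let A : {j : Fin n // j ∈ Set.range ⇑e} ≃ {j : Fin n // ¬ ((j : ℕ) < n - rr)} :=
    ((@Function.Embedding.toEquivRange _ _ _ inst e).symm.trans A')
  have cardeq : Fintype.card {j : Fin n // ¬ j ∈ Set.range ⇑e}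
      = Fintype.card {j : Fin n // ¬ ¬ ((j : ℕ) < n - rr)} := by
    have c1 : Fintype.card {j : Fin n // j ∈ Set.range ⇑e} = rr := by
      rw [Fintype.card_congr (@Function.Embedding.toEquivRange _ _ _ inst e).symm, Fintype.card_fin]
    have c2 : Fintype.card {j : Fin n // ¬ ((j : ℕ) < n - rr)} = rr := by
      rw [Fintype.card_congr A'.symm, Fintype.card_fin]
    have h1 := Fintype.card_subtype_compl (fun j : Fin n => j ∈ Set.range ⇑e)
    have h2 := Fintype.card_subtype_compl (fun j : Fin n => ¬ ((j : ℕ) < n - rr))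
    rw [h1, h2, c1, c2]
  let C : {j : Fin n // ¬ j ∈ Set.range ⇑e} ≃ {j : Fin n // ¬ ¬ ((j : ℕ) < n - rr)} :=
    Fintype.equivOfCardEq cardeq
  let σ : Equiv.Perm (Fin n) := Equiv.subtypeCongr A C
  refine ⟨σ, fun j => ⟨fun h => ?_, fun h => ?_⟩⟩
  · have hσ : σ j = (A ⟨j, h⟩ : Fin n) := by
      simp only [σ, Equiv.subtypeCongr, Equiv.trans_apply,
        Equiv.sumCompl_symm_apply_of_pos h,
        Equiv.sumCongr_apply, Sum.map_inl, Equiv.sumCompl_apply_inl]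
    have hA : ((A ⟨j, h⟩ : Fin n) : ℕ) = n - rr + ((@Function.Embedding.toEquivRange _ _ _ inst e).symm ⟨j, h⟩ : ℕ) := rfl
    rw [hσ, mixedArg, dif_neg (by rw [hA]; omega)]
    have hidx : ∀ hh : ((A ⟨j, h⟩ : Fin n) : ℕ) - (n - rr) < rr,
        (⟨((A ⟨j, h⟩ : Fin n) : ℕ) - (n - rr), hh⟩ : Fin rr) = (@Function.Embedding.toEquivRange _ _ _ inst e).symm ⟨j, h⟩ :=
      fun hh => by ext; simp [hA]
    rw [hidx]
  · have hσ : σ j = (C ⟨j, h⟩ : Fin n) := by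
      simp only [σ, Equiv.subtypeCongr, Equiv.trans_apply,
        Equiv.sumCompl_symm_apply_of_neg h,
        Equiv.sumCongr_apply, Sum.map_inr, Equiv.sumCompl_apply_inr]
    rw [hσ, mixedArg, dif_pos (not_not.mp (C ⟨j, h⟩).2)]

/-- Lemma on partial derivatives of the volume function: Let `γ_Σ` be a
GKZ chamber, an open set in divisor space `ℝ^{Δ(1)}`, on which `ĥ^0` is given by the
top self-intersection of the birational transform: `ĥ^0(D) = (f_*(D)^n) = B(D, …, D)`
(`hvol`), where `B` is the symmetric multilinear intersection form
`(E_1, …, E_n) ↦ (f_*(E_1) ⋯ f_*(E_n))` of `X(Σ)`.  Then for prime `T`-invariant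
divisors `D_1, …, D_r` corresponding to distinct rays `ρ_1, …, ρ_r`,
`∂^r ĥ^0/(∂D_1 ⋯ ∂D_r)(D) = (n!/(n-r)!) · (f_*(D)^{n-r} · f_*(D_1) ⋯ f_*(D_r))`;
in particular this derivative is strictly positive on `γ_Σ` if `ρ_1, …, ρ_r` span a
cone of `Σ` (recorded by its ray sets `Scones`) and vanishes identically on `γ_Σ`
otherwise (these intersection-number facts being `hpos` and `hzero`). -/
theorem gkz_chamber_partial_derivatives_of_volume
    (n r rr : ℕ) (hrr : rr ≤ n)
    (Scones : Finset (Finset (Fin r)))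
    (γ : Set (Fin r → ℝ)) (hopen : IsOpen γ)
    (B : MultilinearMap ℝ (fun _ : Fin n => (Fin r → ℝ)) ℝ)
    (hsymm : ∀ (e : Equiv.Perm (Fin n)) (x : Fin n → (Fin r → ℝ)), B (x ∘ e) = B x)
    (h0 : (Fin r → ℝ) → ℝ)
    (hvol : ∀ d ∈ γ, h0 d = B (fun _ => d))
    (hpos : ∀ d ∈ γ, ∀ ρs : Fin rr → Fin r, Function.Injective ρs →
      Finset.image ρs Finset.univ ∈ Scones → 0 < B (mixedArg n r rr hrr d ρs))
    (hzero : ∀ d ∈ γ, ∀ ρs : Fin rr → Fin r, Function.Injective ρs →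
      Finset.image ρs Finset.univ ∉ Scones → B (mixedArg n r rr hrr d ρs) = 0) :
    ∀ d ∈ γ, ∀ ρs : Fin rr → Fin r, Function.Injective ρs →
      (iteratedFDeriv ℝ rr h0 d (fun i => Pi.single (ρs i) (1 : ℝ))
          = ((n.factorial : ℝ) / ((n - rr).factorial : ℝ)) *
              B (mixedArg n r rr hrr d ρs)) ∧
      (Finset.image ρs Finset.univ ∈ Scones →
        0 < iteratedFDeriv ℝ rr h0 d (fun i => Pi.single (ρs i) (1 : ℝ))) ∧
      (Finset.image ρs Finset.univ ∉ Scones →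
        iteratedFDeriv ℝ rr h0 d (fun i => Pi.single (ρs i) (1 : ℝ)) = 0) := by
  intro d hd ρs hinj
  classical
  have key : iteratedFDeriv ℝ rr h0 d (fun i => Pi.single (ρs i) (1:ℝ))
      = ((n.factorial : ℝ) / ((n - rr).factorial : ℝ)) * B (mixedArg n r rr hrr d ρs) := by
    set v : Fin rr → (Fin r → ℝ) := fun i => (Pi.single (ρs i) (1:ℝ) : Fin r → ℝ) with hv
    set Bc : ContinuousMultilinearMap ℝ (fun _ : Fin n => (Fin r → ℝ)) ℝ :=
      B.mkContinuous _ (multilinear_bound B) with hBcdef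
    have hBc : ∀ m, Bc m = B m := fun m => rfl
    set L : (Fin r → ℝ) →L[ℝ] (Fin n → (Fin r → ℝ)) :=
      ContinuousLinearMap.pi (fun _ => ContinuousLinearMap.id ℝ (Fin r → ℝ)) with hLdef
    have step1 : iteratedFDeriv ℝ rr h0 d = iteratedFDeriv ℝ rr (⇑Bc ∘ ⇑L) d := by
      have heq : h0 =ᶠ[nhds d] (⇑Bc ∘ ⇑L) := by
        filter_upwards [hopen.mem_nhds hd] with x hx
        show h0 x = Bc (L x)
        rw [hvol x hx]; rfl
      rw [← iteratedFDerivWithin_univ, ← iteratedFDerivWithin_univ]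
      exact Filter.EventuallyEq.iteratedFDerivWithin_eq
        (by rw [nhdsWithin_univ]; exact heq) heq.self_of_nhds rr
    rw [step1, ContinuousLinearMap.iteratedFDeriv_comp_right L Bc.contDiff d le_top,
      ContinuousMultilinearMap.compContinuousLinearMap_apply,
      ContinuousMultilinearMap.iteratedFDeriv_eq]
    have hsum : (ContinuousMultilinearMap.iteratedFDeriv Bc rr (L d)) (fun i => L (v i))
        = ∑ _e : Fin rr ↪ Fin n, B (mixedArg n r rr hrr d ρs) := by
      rw [ContinuousMultilinearMap.iteratedFDeriv, ContinuousMultilinearMap.sum_apply]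
      refine Finset.sum_congr rfl fun e _ => ?_
      rw [ContinuousMultilinearMap.iteratedFDerivComponent_apply]
      obtain ⟨σ, hσ⟩ := exists_perm_arg hrr d ρs e (fun a b => Classical.propDecidable (a = b))
      rw [hBc, ← hsymm σ (mixedArg n r rr hrr d ρs)]
      congr 1
      funext j
      by_cases h : j ∈ Set.range ⇑e
      · rw [dif_pos h]
        simpa only [hLdef, hv, Function.comp_apply, ContinuousLinearMap.pi_apply,
          ContinuousLinearMap.id_apply] using (hσ j).1 h
      · rw [dif_neg h]
        simpa only [hLdef, hv, Function.comp_apply, Pi.compRightL_apply,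
          ContinuousLinearMap.pi_apply, ContinuousLinearMap.id_apply] using (hσ j).2 h
    rw [hsum, Finset.sum_const, Finset.card_univ, Fintype.card_embedding_eq,
      Fintype.card_fin, Fintype.card_fin, nsmul_eq_mul]
    congr 1
    have hne : ((n - rr).factorial : ℝ) ≠ 0 := Nat.cast_ne_zero.mpr (Nat.factorial_ne_zero _)
    rw [eq_div_iff hne, ← Nat.cast_mul, mul_comm, Nat.factorial_mul_descFactorial hrr]
  refine ⟨key, fun hin => ?_, fun hout => ?_⟩
  · rw [key]
    exact mul_pos (div_pos (Nat.cast_pos.mpr n.factorial_pos)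
      (Nat.cast_pos.mpr (n - rr).factorial_pos)) (hpos d hd ρs hinj hin)
  · rw [key, hzero d hd ρs hinj hout, mul_zero]
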